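/- In the truncated zero-Hopf amplitude system, let D(ε) denote the determinant of the Jacobian matrix of the right-hand side evaluated at the NS predictor point (x, ρ) = (x₀(ε), ε) with parameters β₁(ε), β₂(ε). Then D(ε)/ε² → −2a₁₁₀f₀₁₁ as ε → 0. Consequently, if a₁₁₀ f₀₁₁ < 0 (the paper's condition Re(g₁₁₀)f₀₁₁ < 0 for a Neimark–Sacker curve to emanate from the zero-Hopf point), then for all sufficiently small ε > 0 one has D(ε) > 0 and (trace)² − 4D(ε) < 0, so the Jacobian at the predictor point has a pair of non-real complex-conjugate eigenvalues. -/

import Mathlib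

open Matrix

lemma my_charpoly_fin_two {R : Type*} [CommRing R] (M : Matrix (Fin 2) (Fin 2) R) :
    M.charpoly = Polynomial.X ^ 2 - Polynomial.C M.trace * Polynomial.X
      + Polynomial.C M.det := by
  rw [Matrix.charpoly, Matrix.det_fin_two, Matrix.trace_fin_two, Matrix.det_fin_two,
    Matrix.charmatrix_apply_eq, Matrix.charmatrix_apply_eq,
    Matrix.charmatrix_apply_ne _ _ _ (by decide), Matrix.charmatrix_apply_ne _ _ _ (by decide)]
  simp only [map_add, _root_.map_mul, map_sub]
  ring

lemma my_map_fin_two (a b c d : ℝ) :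
    (!![a, b; c, d] : Matrix (Fin 2) (Fin 2) ℝ).map Complex.ofReal
      = !![(a : ℂ), b; c, d] := by
  ext i j
  fin_cases i <;> fin_cases j <;> simp

/-- Roots of a real-coefficient quadratic with negative discriminant. -/
lemma quad_root (t d : ℝ) (h : t ^ 2 - 4 * d < 0) :
    ∃ μ : ℂ, μ.im ≠ 0 ∧ μ ^ 2 - t * μ + d = 0 ∧
      (starRingEnd ℂ μ) ^ 2 - t * (starRingEnd ℂ μ) + d = 0 := by
  set s : ℝ := Real.sqrt (4 * d - t ^ 2) / 2 with hs
  have hd : (0:ℝ) < 4 * d - t ^ 2 := by linarith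
  have hspos : 0 < s := by positivity
  have hs2 : s ^ 2 = d - t ^ 2 / 4 := by
    rw [hs, div_pow, Real.sq_sqrt hd.le]; ring
  have hzero : t ^ 2 / 4 - s ^ 2 - t ^ 2 / 2 + d = 0 := by rw [hs2]; ring
  have key : ∀ u : ℝ, u ^ 2 = s ^ 2 →
      ((t / 2 : ℝ) + (u : ℝ) * Complex.I) ^ 2 - t * ((t / 2 : ℝ) + (u : ℝ) * Complex.I) + d
        = 0 := by
    intro u hu
    have h1 : ((t / 2 : ℝ) + (u : ℝ) * Complex.I) ^ 2
          - t * ((t / 2 : ℝ) + (u : ℝ) * Complex.I) + d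
        = ((t ^ 2 / 4 - u ^ 2 - t ^ 2 / 2 + d : ℝ) : ℂ) := by
      push_cast
      ring_nf
      rw [Complex.I_sq]
      ring
    rw [h1, hu, hzero, Complex.ofReal_zero]
  refine ⟨(t / 2 : ℝ) + (s : ℝ) * Complex.I, by simp [hspos.ne'], key s rfl, ?_⟩
  have hconj : (starRingEnd ℂ) ((t / 2 : ℝ) + (s : ℝ) * Complex.I)
      = (t / 2 : ℝ) + (-s : ℝ) * Complex.I := by
    rw [map_add, _root_.map_mul, Complex.conj_ofReal, Complex.conj_ofReal, Complex.conj_I]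
    push_cast
    ring
  rw [hconj]
  exact key (-s) (by ring)

/-- The determinant `D(ε)` of the Jacobian of the truncated zero-Hopf amplitude system at
the NS predictor point satisfies `D(ε)/ε² → -2a₁₁₀f₀₁₁` as `ε → 0`. If `a₁₁₀f₀₁₁ < 0`,
then for all sufficiently small `ε > 0` one has `D(ε) > 0` and `trace² - 4D(ε) < 0`, so
the Jacobian has a pair of non-real complex-conjugate eigenvalues. -/
theorem zero_hopf_ns_predictor_determinant_and_complex_eigenvalues
    (f200 f011 f300 f111 a110 a210 a021 : ℝ) (hf : f200 ≠ 0) :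
    let x₀ : ℝ → ℝ := fun ε => -((f111 + 2 * a021) / (2 * f200)) * ε ^ 2
    let β₁ : ℝ → ℝ := fun ε => -f011 * ε ^ 2
    let β₂ : ℝ → ℝ := fun ε =>
      ((2 * (a110 - f200) * a021 + a110 * f111) / (2 * f200)) * ε ^ 2
    let F1 : ℝ → ℝ → ℝ → ℝ := fun ε x ρ =>
      β₁ ε + f200 * x ^ 2 + f011 * ρ ^ 2 + f300 * x ^ 3 + f111 * x * ρ ^ 2
    let F2 : ℝ → ℝ → ℝ → ℝ := fun ε x ρ =>
      ρ * (β₂ ε + a110 * x + a210 * x ^ 2 + a021 * ρ ^ 2)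
    -- Jacobian matrix at the predictor point (x, ρ) = (x₀(ε), ε)
    let J : ℝ → Matrix (Fin 2) (Fin 2) ℝ := fun ε =>
      !![deriv (fun x => F1 ε x ε) (x₀ ε), deriv (fun ρ => F1 ε (x₀ ε) ρ) ε;
         deriv (fun x => F2 ε x ε) (x₀ ε), deriv (fun ρ => F2 ε (x₀ ε) ρ) ε]
    let D : ℝ → ℝ := fun ε => (J ε).det
    let tr : ℝ → ℝ := fun ε => (J ε).trace
    Filter.Tendsto (fun ε : ℝ => D ε / ε ^ 2) (nhdsWithin 0 {(0 : ℝ)}ᶜ)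
      (nhds (-2 * a110 * f011)) ∧
    (a110 * f011 < 0 → ∃ ε₀ > (0 : ℝ), ∀ ε : ℝ, 0 < ε → ε < ε₀ →
      0 < D ε ∧ (tr ε) ^ 2 - 4 * D ε < 0 ∧
      ∃ μ : ℂ, μ.im ≠ 0 ∧
        ((J ε).map (Complex.ofReal)).charpoly.IsRoot μ ∧
        ((J ε).map (Complex.ofReal)).charpoly.IsRoot (starRingEnd ℂ μ)) := by
  intro x₀ β₁ β₂ F1 F2 J D tr
  have hx0 : ∀ ε : ℝ, x₀ ε = -((f111 + 2 * a021) / (2 * f200)) * ε ^ 2 := fun _ => rfl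
  have hb2 : ∀ ε : ℝ, β₂ ε
      = ((2 * (a110 - f200) * a021 + a110 * f111) / (2 * f200)) * ε ^ 2 := fun _ => rfl
  -- entries of the Jacobian
  set A : ℝ → ℝ := fun ε => 2 * f200 * x₀ ε + 3 * f300 * (x₀ ε) ^ 2 + f111 * ε ^ 2 with hA
  set B : ℝ → ℝ := fun ε => 2 * f011 * ε + 2 * f111 * x₀ ε * ε with hB
  set C : ℝ → ℝ := fun ε => ε * (a110 + 2 * a210 * x₀ ε) with hC
  set E : ℝ → ℝ := fun ε => β₂ ε + a110 * x₀ ε + a210 * (x₀ ε) ^ 2 + 3 * a021 * ε ^ 2 with hE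
  have hJ : ∀ ε : ℝ, J ε = !![A ε, B ε; C ε, E ε] := by
    intro ε
    have h1 : HasDerivAt (fun x => F1 ε x ε) (A ε) (x₀ ε) := by
      have h := (((((hasDerivAt_pow 2 (x₀ ε)).const_mul f200).const_add (β₁ ε)).add_const
          (f011 * ε ^ 2)).add ((hasDerivAt_pow 3 (x₀ ε)).const_mul f300)).add
          (((hasDerivAt_id (x₀ ε)).const_mul f111).mul_const (ε ^ 2))
      refine h.congr_deriv ?_
      simp only [hA]; push_cast; ring
    have h2 : HasDerivAt (fun ρ => F1 ε (x₀ ε) ρ) (B ε) ε := by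
      have h := ((((hasDerivAt_pow 2 ε).const_mul f011).const_add
          (β₁ ε + f200 * (x₀ ε) ^ 2)).add_const (f300 * (x₀ ε) ^ 3)).add
          ((hasDerivAt_pow 2 ε).const_mul (f111 * x₀ ε))
      refine h.congr_deriv ?_
      simp only [hB]; push_cast; ring
    have h3 : HasDerivAt (fun x => F2 ε x ε) (C ε) (x₀ ε) := by
      have h := (((((hasDerivAt_id (x₀ ε)).const_mul a110).const_add (β₂ ε)).add
          ((hasDerivAt_pow 2 (x₀ ε)).const_mul a210)).add_const
          (a021 * ε ^ 2)).const_mul ε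
      refine h.congr_deriv ?_
      simp only [hC, id]; push_cast; ring
    have h4 : HasDerivAt (fun ρ => F2 ε (x₀ ε) ρ) (E ε) ε := by
      have h := (hasDerivAt_id ε).mul
          (((hasDerivAt_pow 2 ε).const_mul a021).const_add
            (β₂ ε + a110 * x₀ ε + a210 * (x₀ ε) ^ 2))
      refine h.congr_deriv ?_
      simp only [hE, id]; push_cast; ring
    show (!![deriv (fun x => F1 ε x ε) (x₀ ε), deriv (fun ρ => F1 ε (x₀ ε) ρ) ε;
         deriv (fun x => F2 ε x ε) (x₀ ε), deriv (fun ρ => F2 ε (x₀ ε) ρ) ε]) = _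
    rw [h1.deriv, h2.deriv, h3.deriv, h4.deriv]
  set c : ℝ := (f111 + 2 * a021) / (2 * f200) with hc
  set G : ℝ → ℝ := fun ε =>
    ε ^ 2 * ((-2 * a021 + 3 * f300 * c ^ 2 * ε ^ 2) * (2 * a021 + a210 * c ^ 2 * ε ^ 2))
      - (2 * f011 - 2 * f111 * c * ε ^ 2) * (a110 - 2 * a210 * c * ε ^ 2) with hG
  have hf2 : (2 : ℝ) * f200 ≠ 0 := mul_ne_zero two_ne_zero hf
  have hD : ∀ ε : ℝ, D ε = ε ^ 2 * G ε := by
    intro ε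
    show (J ε).det = _
    rw [hJ ε, Matrix.det_fin_two_of]
    simp only [hA, hB, hC, hE, hG, hx0, hb2, hc]
    field_simp
    ring
  have htr : ∀ ε : ℝ, tr ε = (3 * f300 + a210) * c ^ 2 * ε ^ 4 := by
    intro ε
    show (J ε).trace = _
    rw [hJ ε, Matrix.trace_fin_two_of]
    simp only [hA, hE, hx0, hb2, hc]
    field_simp
    ring
  have hGcont : Continuous G := by rw [hG]; fun_prop
  have hG0 : G 0 = -2 * a110 * f011 := by simp only [hG]; ring_nf
  constructor
  · have h1 : Filter.Tendsto G (nhdsWithin 0 {(0:ℝ)}ᶜ) (nhds (-2 * a110 * f011)) := by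
      rw [← hG0]
      exact (hGcont.tendsto 0).mono_left nhdsWithin_le_nhds
    refine h1.congr' ?_
    filter_upwards [self_mem_nhdsWithin] with ε hε
    have hε0 : (ε : ℝ) ≠ 0 := hε
    rw [hD ε]
    field_simp
  · intro hcond
    set K : ℝ := (3 * f300 + a210) * c ^ 2 with hK
    set H : ℝ → ℝ := fun ε => K ^ 2 * ε ^ 6 - 4 * G ε with hH
    have hHcont : Continuous H := by rw [hH]; fun_prop
    have hG0pos : 0 < G 0 := by rw [hG0]; nlinarith
    have hH0neg : H 0 < 0 := by
      simp only [hH]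
      have : G 0 > 0 := hG0pos
      nlinarith
    have h1 : ∀ᶠ ε in nhds (0 : ℝ), 0 < G ε :=
      (hGcont.tendsto 0).eventually (eventually_gt_nhds hG0pos)
    have h2 : ∀ᶠ ε in nhds (0 : ℝ), H ε < 0 :=
      (hHcont.tendsto 0).eventually (eventually_lt_nhds hH0neg)
    obtain ⟨δ, hδpos, hδ⟩ := Metric.eventually_nhds_iff.mp (h1.and h2)
    refine ⟨δ, hδpos, fun ε hε hεδ => ?_⟩
    have hball : dist ε (0 : ℝ) < δ := by
      rw [Real.dist_eq, sub_zero, abs_of_pos hε]; exact hεδ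
    obtain ⟨hGpos, hHneg⟩ := hδ hball
    have hDpos : 0 < D ε := by rw [hD ε]; positivity
    have hdisc : (tr ε) ^ 2 - 4 * D ε < 0 := by
      rw [htr ε, hD ε]
      have : ((3 * f300 + a210) * c ^ 2 * ε ^ 4) ^ 2 - 4 * (ε ^ 2 * G ε)
          = ε ^ 2 * H ε := by
        simp only [hH, hK]; ring
      rw [this]
      exact mul_neg_of_pos_of_neg (by positivity) hHneg
    refine ⟨hDpos, hdisc, ?_⟩
    obtain ⟨μ, hμim, hroot, hroot'⟩ := quad_root (tr ε) (D ε) hdisc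
    refine ⟨μ, hμim, ?_, ?_⟩ <;>
    · rw [hJ ε, my_map_fin_two, my_charpoly_fin_two, Matrix.trace_fin_two_of,
        Matrix.det_fin_two_of]
      have htrval : (tr ε : ℂ) = (A ε : ℂ) + (E ε : ℂ) := by
        have : tr ε = A ε + E ε := by
          show (J ε).trace = _
          rw [hJ ε, Matrix.trace_fin_two_of]
        rw [this]; push_cast; ring
      have hdetval : (D ε : ℂ) = (A ε : ℂ) * (E ε : ℂ) - (B ε : ℂ) * (C ε : ℂ) := by
        have : D ε = A ε * E ε - B ε * C ε := by
          show (J ε).det = _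
          rw [hJ ε, Matrix.det_fin_two_of]
        rw [this]; push_cast; ring
      simp only [Polynomial.IsRoot, Polynomial.eval_add, Polynomial.eval_sub,
        Polynomial.eval_mul, Polynomial.eval_pow, Polynomial.eval_X, Polynomial.eval_C]
      first
      | (rw [← htrval, ← hdetval] at *
         linear_combination hroot)
      | (rw [← htrval, ← hdetval] at *
         linear_combination hroot')
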